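/- Let m ≥ 4 and n > m. Let α, β ∈ S_m with α fixed point free and β ≠ e, regarded as elements of S_n by acting trivially on {m+1,...,n}. Then η(α^{S_m} β^{S_m}) < η(α^{S_n} β^{S_n}). -/

import Mathlib

/-- The conjugacy class of `a` in `G`. -/
def conjClass {G : Type*} [Group G] (a : G) : Set G := {x | IsConj a x}

/-- The product of two subsets of a group. -/
def setProd {G : Type*} [Group G] (C D : Set G) : Set G := {z | ∃ c ∈ C, ∃ d ∈ D, z = c * d}

/-- The number of conjugacy classes meeting a set `X`. -/
noncomputable def eta {G : Type*} [Group G] (X : Set G) : ℕ :=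
  Nat.card {c : ConjClasses G // (c.carrier ∩ X).Nonempty}


/-- Conjugacy class of `a` under conjugation by the copy of `S_r` inside `S_n`, i.e.
by permutations fixing every point of index `≥ r`. -/
def subClass (n r : ℕ) (a : Equiv.Perm (Fin n)) : Set (Equiv.Perm (Fin n)) :=
  {x | ∃ σ : Equiv.Perm (Fin n), (∀ i : Fin n, r ≤ (i : ℕ) → σ i = i) ∧ x = σ⁻¹ * a * σ}

section Stmt6Helpers
open Equiv Finset

lemma exists_pair_map {n : ℕ} (a b a' b' : Fin n) (hab : a ≠ b) (hab' : a' ≠ b') :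
    ∃ τ : Equiv.Perm (Fin n), τ a = a' ∧ τ b = b' ∧
      ∀ x, x ≠ a → x ≠ b → x ≠ a' → x ≠ b' → τ x = x := by
  have ht : Equiv.swap a a' b ≠ a' := by
    intro h
    rw [Equiv.swap_apply_eq_iff, Equiv.swap_apply_right] at h
    exact hab h.symm
  refine ⟨Equiv.swap (Equiv.swap a a' b) b' * Equiv.swap a a', ?_, ?_, ?_⟩
  · simp only [Equiv.Perm.mul_apply, Equiv.swap_apply_left]
    exact Equiv.swap_apply_of_ne_of_ne ht.symm hab'
  · simp only [Equiv.Perm.mul_apply]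
    exact Equiv.swap_apply_left _ _
  · intro x hxa hxb hxa' hxb'
    have h1 : Equiv.swap a a' x = x := Equiv.swap_apply_of_ne_of_ne hxa hxa'
    have h2 : x ≠ Equiv.swap a a' b := by
      intro h
      rcases eq_or_ne b a with rfl | hba
      · simp at h; exact hxa' h
      · rcases eq_or_ne b a' with rfl | hba'
        · rw [Equiv.swap_apply_right] at h; exact hxa h
        · rw [Equiv.swap_apply_of_ne_of_ne hba hba'] at h; exact hxb h
    simp only [Equiv.Perm.mul_apply, h1]
    exact Equiv.swap_apply_of_ne_of_ne h2 hxb'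

lemma lt_of_fix {n m : ℕ} (ρ : Equiv.Perm (Fin n))
    (hρ : ∀ i : Fin n, m ≤ (i : ℕ) → ρ i = i) {x : Fin n} (hx : (x : ℕ) < m) :
    ((ρ x : Fin n) : ℕ) < m := by
  by_contra h
  push_neg at h
  have h2 : ρ (ρ x) = ρ x := hρ (ρ x) h
  have h3 := ρ.injective h2
  rw [h3] at h
  omega

lemma exists_good {n : ℕ} (m : ℕ) (hm2 : 2 ≤ m) (hmn : m < n) (γ : Equiv.Perm (Fin n))
    (hγfix : ∀ i : Fin n, m ≤ (i : ℕ) → γ i = i)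
    (hγ : ∀ i : Fin n, (i : ℕ) < m → γ i ≠ i)
    (S : Finset (Fin n)) (v : Fin n → Fin n)
    (hSm : ∀ i ∈ S, (i : ℕ) < m) (hvm : ∀ i ∈ S, ((v i : Fin n) : ℕ) < m)
    (hvi : ∀ i ∈ S, v i ≠ i) (hcard : S.card < m - 1) :
    ∃ ρ : Equiv.Perm (Fin n), (∀ i : Fin n, m ≤ (i : ℕ) → ρ i = i) ∧
      ∀ i ∈ S, γ (ρ (v i)) ≠ ρ i := by
  classical
  set H : Finset (Equiv.Perm (Fin n)) :=
    univ.filter (fun ρ => ∀ i : Fin n, m ≤ (i : ℕ) → ρ i = i) with hH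
  have memH : ∀ ρ : Equiv.Perm (Fin n), ρ ∈ H ↔ (∀ i : Fin n, m ≤ (i : ℕ) → ρ i = i) := by
    intro ρ; simp [hH]
  set Mset : Finset (Fin n) := univ.filter (fun i => (i : ℕ) < m) with hMset
  have memM : ∀ i : Fin n, i ∈ Mset ↔ (i : ℕ) < m := by intro i; simp [hMset]
  have hMcard : Mset.card = m := by
    have : Mset = Finset.map (Fin.castLEEmb hmn.le) univ := by
      ext i
      simp only [memM, Finset.mem_map, Finset.mem_univ, true_and]
      constructor
      · intro hi; exact ⟨⟨(i : ℕ), hi⟩, by ext; simp⟩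
      · rintro ⟨a, rfl⟩; simpa using a.2
    rw [this, Finset.card_map, Finset.card_fin]
  -- fibers
  set fib : Fin n → Fin n → Fin n → Fin n → Finset (Equiv.Perm (Fin n)) :=
    fun u w a b => H.filter (fun ρ => ρ u = a ∧ ρ w = b) with hfib
  -- all fibers with data in M have equal cardinality
  have key : ∀ u w a b u' w' a' b' : Fin n, (u:ℕ) < m → (w:ℕ) < m → (a:ℕ) < m → (b:ℕ) < m →
      (u':ℕ) < m → (w':ℕ) < m → (a':ℕ) < m → (b':ℕ) < m →
      u ≠ w → a ≠ b → u' ≠ w' → a' ≠ b' →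
      (fib u w a b).card = (fib u' w' a' b').card := by
    intro u w a b u' w' a' b' hu hw ha hb hu' hw' ha' hb' huw hab huw' hab'
    obtain ⟨τL, hτL1, hτL2, hτL3⟩ := exists_pair_map a b a' b' hab hab'
    obtain ⟨τR, hτR1, hτR2, hτR3⟩ := exists_pair_map u' w' u w huw' huw
    have hLfix : ∀ i : Fin n, m ≤ (i : ℕ) → τL i = i := by
      intro i hi
      refine hτL3 i ?_ ?_ ?_ ?_ <;> (intro h; rw [h] at hi; omega)
    have hRfix : ∀ i : Fin n, m ≤ (i : ℕ) → τR i = i := by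
      intro i hi
      refine hτR3 i ?_ ?_ ?_ ?_ <;> (intro h; rw [h] at hi; omega)
    have hLfix' : ∀ i : Fin n, m ≤ (i : ℕ) → τL⁻¹ i = i := by
      intro i hi; rw [Equiv.Perm.inv_eq_iff_eq]; exact (hLfix i hi).symm
    have hRfix' : ∀ i : Fin n, m ≤ (i : ℕ) → τR⁻¹ i = i := by
      intro i hi; rw [Equiv.Perm.inv_eq_iff_eq]; exact (hRfix i hi).symm
    refine Finset.card_bij' (fun ρ _ => τL * ρ * τR) (fun ρ _ => τL⁻¹ * ρ * τR⁻¹) ?_ ?_ ?_ ?_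
    · intro ρ hρ
      simp only [hfib, Finset.mem_filter] at hρ ⊢
      have hρH := hρ.1
      have hρu := hρ.2.1
      have hρw := hρ.2.2
      rw [memH] at hρH
      refine ⟨(memH _).2 ?_, ?_, ?_⟩
      · intro i hi
        simp only [Equiv.Perm.mul_apply, hRfix i hi, hρH i hi, hLfix i hi]
      · simp only [Equiv.Perm.mul_apply, hτR1, hρu, hτL1]
      · simp only [Equiv.Perm.mul_apply, hτR2, hρw, hτL2]
    · intro ρ hρ
      simp only [hfib, Finset.mem_filter] at hρ ⊢
      have hρH := hρ.1
      have hρu := hρ.2.1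
      have hρw := hρ.2.2
      rw [memH] at hρH
      have hτR1' : τR⁻¹ u = u' := by rw [Equiv.Perm.inv_eq_iff_eq]; exact hτR1.symm
      have hτR2' : τR⁻¹ w = w' := by rw [Equiv.Perm.inv_eq_iff_eq]; exact hτR2.symm
      have hτL1' : τL⁻¹ a' = a := by rw [Equiv.Perm.inv_eq_iff_eq]; exact hτL1.symm
      have hτL2' : τL⁻¹ b' = b := by rw [Equiv.Perm.inv_eq_iff_eq]; exact hτL2.symm
      refine ⟨(memH _).2 ?_, ?_, ?_⟩
      · intro i hi
        simp only [Equiv.Perm.mul_apply, hRfix' i hi, hρH i hi, hLfix' i hi]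
      · simp only [Equiv.Perm.mul_apply, hτR1', hρu, hτL1']
      · simp only [Equiv.Perm.mul_apply, hτR2', hρw, hτL2']
    · intro ρ _; group
    · intro ρ _; group
  have h0m : (0 : ℕ) < m := by omega
  set u₀ : Fin n := ⟨0, by omega⟩ with hu₀
  set w₀ : Fin n := ⟨1, by omega⟩ with hw₀
  have hu₀m : (u₀ : ℕ) < m := by simp [hu₀]; omega
  have hw₀m : (w₀ : ℕ) < m := by simp [hw₀]; omega
  have huw₀ : u₀ ≠ w₀ := by simp [hu₀, hw₀, Fin.ext_iff]
  set c := (fib u₀ w₀ u₀ w₀).card with hc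
  have hc1 : 1 ≤ c := by
    rw [hc]
    refine Finset.card_pos.mpr ⟨1, ?_⟩
    simp only [hfib, Finset.mem_filter]
    exact ⟨(memH 1).2 (fun i _ => rfl), rfl, rfl⟩
  have hHcard : H.card = (m * m - m) * c := by
    have h1 : H.card = ∑ p ∈ Mset.offDiag,
        (H.filter (fun ρ => (ρ u₀, ρ w₀) = p)).card := by
      refine Finset.card_eq_sum_card_fiberwise ?_
      intro ρ hρ
      have hρfix := (memH ρ).1 hρ
      refine Finset.mem_offDiag.2 ⟨(memM _).2 (lt_of_fix ρ hρfix hu₀m),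
        (memM _).2 (lt_of_fix ρ hρfix hw₀m), fun h => huw₀ (ρ.injective h)⟩
    have h2 : ∀ p ∈ Mset.offDiag,
        (H.filter (fun ρ => (ρ u₀, ρ w₀) = p)).card = c := by
      intro p hp
      obtain ⟨hp1, hp2, hp3⟩ := Finset.mem_offDiag.1 hp
      have e1 : H.filter (fun ρ => (ρ u₀, ρ w₀) = p) = fib u₀ w₀ p.1 p.2 := by
        simp only [hfib]
        congr 1
        ext ρ
        simp [Prod.ext_iff]
      rw [e1, hc]
      exact key u₀ w₀ p.1 p.2 u₀ w₀ u₀ w₀ hu₀m hw₀m ((memM _).1 hp1) ((memM _).1 hp2)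
        hu₀m hw₀m hu₀m hw₀m huw₀ hp3 huw₀ huw₀
    rw [h1, Finset.sum_congr rfl h2, Finset.sum_const, smul_eq_mul,
      Finset.offDiag_card, hMcard]
  by_contra hcon
  push_neg at hcon
  have hsub : H ⊆ S.biUnion (fun i => H.filter (fun ρ => γ (ρ (v i)) = ρ i)) := by
    intro ρ hρ
    obtain ⟨i, hiS, hieq⟩ := hcon ρ ((memH ρ).1 hρ)
    exact Finset.mem_biUnion.2 ⟨i, hiS, Finset.mem_filter.2 ⟨hρ, hieq⟩⟩
  have hbad : ∀ i ∈ S, (H.filter (fun ρ => γ (ρ (v i)) = ρ i)).card ≤ m * c := by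
    intro i hiS
    have hsub2 : H.filter (fun ρ => γ (ρ (v i)) = ρ i) ⊆
        Mset.biUnion (fun a => fib (v i) i a (γ a)) := by
      intro ρ hρ
      obtain ⟨hρH, heq⟩ := Finset.mem_filter.1 hρ
      have hρfix := (memH ρ).1 hρH
      refine Finset.mem_biUnion.2 ⟨ρ (v i), (memM _).2 (lt_of_fix ρ hρfix (hvm i hiS)), ?_⟩
      exact Finset.mem_filter.2 ⟨hρH, rfl, heq.symm⟩
    calc (H.filter (fun ρ => γ (ρ (v i)) = ρ i)).card
        ≤ (Mset.biUnion (fun a => fib (v i) i a (γ a))).card := Finset.card_le_card hsub2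
      _ ≤ ∑ a ∈ Mset, (fib (v i) i a (γ a)).card := Finset.card_biUnion_le
      _ ≤ ∑ _a ∈ Mset, c := by
          refine Finset.sum_le_sum ?_
          intro a haM
          have ham := (memM a).1 haM
          have hγam : ((γ a : Fin n) : ℕ) < m := lt_of_fix γ hγfix ham
      
          exact le_of_eq (key (v i) i a (γ a) u₀ w₀ u₀ w₀ (hvm i hiS) (hSm i hiS) ham hγam
            hu₀m hw₀m hu₀m hw₀m (hvi i hiS) (Ne.symm (hγ a ham)) huw₀ huw₀)
      _ = m * c := by rw [Finset.sum_const, smul_eq_mul, hMcard]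
  have hfinal : H.card ≤ S.card * (m * c) := by
    calc H.card ≤ (S.biUnion (fun i => H.filter (fun ρ => γ (ρ (v i)) = ρ i))).card :=
          Finset.card_le_card hsub
      _ ≤ ∑ i ∈ S, (H.filter (fun ρ => γ (ρ (v i)) = ρ i)).card := Finset.card_biUnion_le
      _ ≤ ∑ _i ∈ S, (m * c) := Finset.sum_le_sum hbad
      _ = S.card * (m * c) := by rw [Finset.sum_const, smul_eq_mul]
  rw [hHcard] at hfinal
  obtain ⟨k, rfl⟩ : ∃ k, m = k + 2 := ⟨m - 2, by omega⟩
  have hSk : S.card ≤ k := by omega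
  have : ((k+2) * (k+2) - (k+2)) * c ≤ k * ((k+2) * c) :=
    le_trans hfinal (Nat.mul_le_mul_right _ hSk)
  have he : (k+2) * (k+2) - (k+2) = (k+1) * (k+2) := by ring_nf; omega
  rw [he] at this
  nlinarith [hc1]

end Stmt6Helpers

open Equiv Finset

theorem stmt6 (m n : ℕ) (hm : 4 ≤ m) (hmn : m < n) (α β : Equiv.Perm (Fin n))
    (hα : ∀ i : Fin n, m ≤ (i : ℕ) → α i = i)
    (hβ : ∀ i : Fin n, m ≤ (i : ℕ) → β i = i)
    (hαfpf : ∀ i : Fin n, (i : ℕ) < m → α i ≠ i)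
    (hβne : β ≠ 1) :
    eta (setProd (subClass n m α) (subClass n m β)) <
      eta (setProd (conjClass α) (conjClass β)) := by
  classical
  set Mset : Finset (Fin n) := univ.filter (fun i => (i : ℕ) < m) with hMset
  have memM : ∀ i : Fin n, i ∈ Mset ↔ (i : ℕ) < m := by intro i; simp [hMset]
  have hMcard : Mset.card = m := by
    have : Mset = Finset.map (Fin.castLEEmb hmn.le) univ := by
      ext i
      simp only [memM, Finset.mem_map, Finset.mem_univ, true_and]
      constructor
      · intro hi; exact ⟨⟨(i : ℕ), hi⟩, by ext; simp⟩
      · rintro ⟨a, rfl⟩; simpa using a.2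
    rw [this, Finset.card_map, Finset.card_fin]
  set Xs := setProd (subClass n m α) (subClass n m β) with hXsdef
  set Xb := setProd (conjClass α) (conjClass β) with hXbdef
  -- elements of Xs fix the tail
  have hXs : ∀ x ∈ Xs, ∀ i : Fin n, m ≤ (i : ℕ) → x i = i := by
    rintro x ⟨g, ⟨σ, hσ, rfl⟩, h, ⟨τ, hτ, rfl⟩, rfl⟩ i hi
    have hσ' : σ⁻¹ i = i := by rw [Equiv.Perm.inv_eq_iff_eq]; exact (hσ i hi).symm
    have hτ' : τ⁻¹ i = i := by rw [Equiv.Perm.inv_eq_iff_eq]; exact (hτ i hi).symm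
    simp [Equiv.Perm.mul_apply, hτ i hi, hβ i hi, hτ', hσ i hi, hα i hi, hσ']
  have hsubX : Xs ⊆ Xb := by
    rintro x ⟨g, ⟨σ, hσ, rfl⟩, h, ⟨τ, hτ, rfl⟩, rfl⟩
    refine ⟨σ⁻¹ * α * σ, ?_, τ⁻¹ * β * τ, ?_, rfl⟩
    · exact isConj_iff.2 ⟨σ⁻¹, by group⟩
    · exact isConj_iff.2 ⟨τ⁻¹, by group⟩
  -- find j
  have hjex : ∃ j : Fin n, β j ≠ j ∧ (j : ℕ) < m := by
    by_contra hcon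
    push_neg at hcon
    apply hβne
    ext x
    rcases lt_or_ge ((x : ℕ)) m with hx | hx
    · by_contra hne
      have h1 := hcon x (by intro h; exact hne (by simp [h]))
      omega
    · simp [hβ x hx]
  obtain ⟨j, hj, hjm⟩ := hjex
  have hβinvfix : ∀ i : Fin n, m ≤ (i : ℕ) → β⁻¹ i = i := fun i hi => by
    rw [Equiv.Perm.inv_eq_iff_eq]; exact (hβ i hi).symm
  have hβjm : ((β j : Fin n) : ℕ) < m := lt_of_fix β hβ hjm
  have hβinvjm : ((β⁻¹ j : Fin n) : ℕ) < m := lt_of_fix β⁻¹ hβinvfix hjm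
  have hβinvjj : β⁻¹ j ≠ j := by
    intro h
    apply hj
    conv_lhs => rw [← h]
    exact Equiv.apply_symm_apply β j
  set S : Finset (Fin n) := (β.support.erase j).erase (β⁻¹ j) with hS
  have hjsup : j ∈ β.support := Equiv.Perm.mem_support.2 hj
  have hinvsup : β⁻¹ j ∈ β.support.erase j := by
    refine Finset.mem_erase.2 ⟨hβinvjj, Equiv.Perm.mem_support.2 ?_⟩
    rw [(by exact Equiv.apply_symm_apply β j : β (β⁻¹ j) = j)]
    exact Ne.symm hβinvjj
  have hsuppM : β.support ⊆ Mset := by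
    intro i hi
    rw [memM]
    by_contra hge
    push_neg at hge
    exact (Equiv.Perm.mem_support.1 hi) (hβ i hge)
  have hsupcard : β.support.card ≤ m := le_trans (Finset.card_le_card hsuppM) hMcard.le
  have hScard : S.card < m - 1 := by
    rw [hS, Finset.card_erase_of_mem hinvsup, Finset.card_erase_of_mem hjsup]
    omega
  have hSmem : ∀ i ∈ S, β i ≠ i ∧ i ≠ j ∧ i ≠ β⁻¹ j ∧ (i : ℕ) < m := by
    intro i hi
    rw [hS, Finset.mem_erase, Finset.mem_erase, Equiv.Perm.mem_support] at hi
    exact ⟨hi.2.2, hi.2.1, hi.1, by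
      have := hsuppM (Equiv.Perm.mem_support.2 hi.2.2); rwa [memM] at this⟩
  obtain ⟨ρ, hρfix, hρ⟩ := exists_good m (by omega) hmn α hα hαfpf S (fun i => β i)
    (fun i hi => (hSmem i hi).2.2.2) (fun i hi => lt_of_fix β hβ (hSmem i hi).2.2.2)
    (fun i hi => (hSmem i hi).1) hScard
  set mm : Fin n := ⟨m, hmn⟩ with hmm
  have hjmm : j ≠ mm := by intro h; rw [h] at hjm; simp [hmm] at hjm
  set cs : Equiv.Perm (Fin n) := Equiv.swap j mm with hcs
  set α' : Equiv.Perm (Fin n) := ρ⁻¹ * α * ρ with hα'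
  set β' : Equiv.Perm (Fin n) := cs * β * cs⁻¹ with hβ'
  set z := α' * β' with hz
  have hzXb : z ∈ Xb := by
    refine ⟨α', ?_, β', ?_, rfl⟩
    · exact isConj_iff.2 ⟨ρ⁻¹, by rw [hα']; group⟩
    · exact isConj_iff.2 ⟨cs, by rw [hβ']⟩
  have hρfix' : ∀ i : Fin n, m ≤ (i : ℕ) → ρ⁻¹ i = i := fun i hi => by
    rw [Equiv.Perm.inv_eq_iff_eq]; exact (hρfix i hi).symm
  have hα'fix : ∀ i : Fin n, m ≤ (i : ℕ) → α' i = i := fun i hi => by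
    simp [hα', Equiv.Perm.mul_apply, hρfix i hi, hα i hi, hρfix' i hi]
  have hα'fpf : ∀ x : Fin n, (x : ℕ) < m → α' x ≠ x := by
    intro x hx hcontra
    simp only [hα', Equiv.Perm.mul_apply] at hcontra
    rw [Equiv.Perm.inv_eq_iff_eq] at hcontra
    exact hαfpf (ρ x) (lt_of_fix ρ hρfix hx) hcontra
  have hα'M : ∀ x : Fin n, (x : ℕ) < m → ((α' x : Fin n) : ℕ) < m :=
    fun x hx => lt_of_fix α' hα'fix hx
  have hzxeq : ∀ x : Fin n, z x = α' (cs (β (cs x))) := by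
    intro x
    simp only [hz, hβ', hcs, Equiv.Perm.mul_apply, Equiv.swap_inv]
  have hzmoves : ∀ x : Fin n, (x : ℕ) < m + 1 → z x ≠ x := by
    intro x hx
    rcases eq_or_ne x mm with rfl | hxmm
    · rw [hzxeq, Equiv.swap_apply_right]
      have hβjmm : β j ≠ mm := by
        intro h; rw [h] at hβjm; simp [hmm] at hβjm
      rw [Equiv.swap_apply_of_ne_of_ne hj hβjmm]
      intro hcontra
      have h2 := hα'M (β j) hβjm
      rw [hcontra] at h2
      simp [hmm] at h2
    · have hxm : (x : ℕ) < m := by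
        rcases eq_or_lt_of_le (Nat.lt_succ_iff.1 hx) with heq | hlt
        · exact absurd (Fin.ext heq : x = mm) hxmm
        · exact hlt
      rcases eq_or_ne x j with rfl | hxj
      · rw [hzxeq, Equiv.swap_apply_left, hβ mm (by simp [hmm]), Equiv.swap_apply_right]
        exact hα'fpf x hxm
      rcases eq_or_ne x (β⁻¹ j) with rfl | hxbj
      · rw [hzxeq, Equiv.swap_apply_of_ne_of_ne hxj hxmm, (by exact Equiv.apply_symm_apply β j : β (β⁻¹ j) = j),
          Equiv.swap_apply_left, hα'fix mm (by simp [hmm])]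
        exact Ne.symm hxmm
      · rw [hzxeq, Equiv.swap_apply_of_ne_of_ne hxj hxmm]
        rcases eq_or_ne (β x) x with hfix | hmove
        · rw [hfix, Equiv.swap_apply_of_ne_of_ne hxj hxmm]
          exact hα'fpf x hxm
        · have hxS : x ∈ S := by
            rw [hS]
            exact Finset.mem_erase.2 ⟨hxbj, Finset.mem_erase.2 ⟨hxj,
              Equiv.Perm.mem_support.2 hmove⟩⟩
          have hβxj : β x ≠ j := fun h => hxbj (by rw [← h, (by exact Equiv.symm_apply_apply β x : β⁻¹ (β x) = x)])
          have hβxm : ((β x : Fin n) : ℕ) < m := lt_of_fix β hβ hxm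
          have hβxmm : β x ≠ mm := by
            intro h; rw [h] at hβxm; simp [hmm] at hβxm
          rw [Equiv.swap_apply_of_ne_of_ne hβxj hβxmm]
          intro hcontra
          apply hρ x hxS
          simp only [hα', Equiv.Perm.mul_apply] at hcontra
          rw [Equiv.Perm.inv_eq_iff_eq] at hcontra
          exact hcontra
  have hzcard : m + 1 ≤ z.support.card := by
    have hsub : insert mm Mset ⊆ z.support := by
      intro x hxmem
      rcases Finset.mem_insert.1 hxmem with rfl | hxM
      · exact Equiv.Perm.mem_support.2 (hzmoves _ (by rw [hmm]; simp))
      · refine Equiv.Perm.mem_support.2 (hzmoves x ?_)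
        have := (memM x).1 hxM
        omega
    have hnotmem : mm ∉ Mset := by
      rw [memM]; simp [hmm]
    calc m + 1 = (insert mm Mset).card := by
          rw [Finset.card_insert_of_notMem hnotmem, hMcard]
      _ ≤ z.support.card := Finset.card_le_card hsub
  -- final eta computation
  set A : Set (ConjClasses (Equiv.Perm (Fin n))) :=
    {c | (ConjClasses.carrier c ∩ Xs).Nonempty} with hA
  set B : Set (ConjClasses (Equiv.Perm (Fin n))) :=
    {c | (ConjClasses.carrier c ∩ Xb).Nonempty} with hB
  have hetaA : eta Xs = A.ncard := Nat.card_coe_set_eq A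
  have hetaB : eta Xb = B.ncard := Nat.card_coe_set_eq B
  rw [hetaA, hetaB]
  have hAB : A ⊆ B := by
    rintro c ⟨y, hy1, hy2⟩
    exact ⟨y, hy1, hsubX hy2⟩
  refine Set.ncard_lt_ncard ?_ (Set.toFinite B)
  rw [Set.ssubset_iff_of_subset hAB]
  refine ⟨ConjClasses.mk z, ⟨z, ConjClasses.mem_carrier_mk, hzXb⟩, ?_⟩
  rintro ⟨y, hy1, hy2⟩
  have hconj : IsConj y z :=
    ConjClasses.mk_eq_mk_iff_isConj.1 (ConjClasses.mem_carrier_iff_mk_eq.1 hy1)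
  obtain ⟨u, hu⟩ := isConj_iff.1 hconj
  have hcards : z.support.card = y.support.card := by
    rw [← hu]; exact Equiv.Perm.card_support_conj
  have hysupp : y.support.card ≤ m := by
    refine le_trans (Finset.card_le_card ?_) hMcard.le
    intro i hi
    rw [memM]
    by_contra hge
    push_neg at hge
    exact (Equiv.Perm.mem_support.1 hi) (hXs y hy2 i hge)
  omega
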